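/- Let F : 2^Ω → ℝ be normalized and monotone, let f̃ be its partition multilinear extension, let P = {x ∈ [0,1]^Ω : Σ_{e ∈ Ω_i} x_e ≤ 1 for all i ∈ N} be the partition matroid polytope and 𝓕 = {x ∈ P : Σ_{e ∈ Ω_i} x_e = 1 for all i ∈ N} its categorical face. Then (a) for every x ∈ P there exists x̄ ∈ 𝓕 with f̃(x̄) ≥ f̃(x), so that the maximum of f̃ over P is attained on 𝓕; and (b) the maximum of f̃ over 𝓕 is at least max_{A ∈ I} F(A). -/

import Mathlib

open Finset
open scoped Classical

/-- Feasibility in the partition matroid: at most one element per block. -/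
def feasible {N Ω : Type*} [Fintype N] [Fintype Ω] (blk : Ω → N) (A : Finset Ω) : Prop :=
  ∀ i : N, (A.filter (fun e => blk e = i)).card ≤ 1

/-- Per-agent probability factor `p_i(A; x)`. -/
noncomputable def blockProb {N Ω : Type*} [Fintype N] [Fintype Ω] (blk : Ω → N) (x : Ω → ℝ)
    (A : Finset Ω) (i : N) : ℝ :=
  if A.filter (fun e => blk e = i) = ∅ then
    1 - ∑ e ∈ Finset.univ.filter (fun e => blk e = i), x e
  else ∑ e ∈ A.filter (fun e => blk e = i), x e

/-- The partition multilinear extension. -/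
noncomputable def pme {N Ω : Type*} [Fintype N] [Fintype Ω] (blk : Ω → N) (F : Finset Ω → ℝ)
    (x : Ω → ℝ) : ℝ :=
  ∑ A ∈ Finset.univ.filter (fun A => feasible blk A), F A * ∏ i : N, blockProb blk x A i

/-- Partial derivative of `f` in coordinate `e` at `x`. -/
noncomputable def pderiv {Ω : Type*} (f : (Ω → ℝ) → ℝ) (e : Ω) (x : Ω → ℝ) : ℝ :=
  deriv (fun t : ℝ => f (Function.update x e t)) (x e)

/-- Membership in the partition matroid polytope `P`. -/
def memPolytope {N Ω : Type*} [Fintype N] [Fintype Ω] (blk : Ω → N) (x : Ω → ℝ) : Prop :=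
  (∀ e, 0 ≤ x e ∧ x e ≤ 1) ∧
    ∀ i : N, ∑ e ∈ Finset.univ.filter (fun e => blk e = i), x e ≤ 1

/-- Membership in the categorical face `𝓕` of the partition matroid polytope. -/
def memFace {N Ω : Type*} [Fintype N] [Fintype Ω] (blk : Ω → N) (x : Ω → ℝ) : Prop :=
  (∀ e, 0 ≤ x e ∧ x e ≤ 1) ∧
    ∀ i : N, ∑ e ∈ Finset.univ.filter (fun e => blk e = i), x e = 1

/-- Submodularity of a set function. -/
def Submodular {Ω : Type*} [Fintype Ω] (F : Finset Ω → ℝ) : Prop :=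
  ∀ A B : Finset Ω, A ⊆ B → ∀ e ∉ B, F (insert e B) - F B ≤ F (insert e A) - F A

section Aux
variable {N Ω : Type*} [Fintype N] [Fintype Ω] {blk : Ω → N}

lemma blockProb_nonneg {x : Ω → ℝ} (hx : memPolytope blk x) (A : Finset Ω) (i : N) :
    0 ≤ blockProb blk x A i := by
  unfold blockProb
  split
  · linarith [hx.2 i]
  · exact Finset.sum_nonneg fun e _ => (hx.1 e).1

lemma sum_update_mem {y : Ω → ℝ} {e : Ω} {t : ℝ} {s : Finset Ω} (he : e ∈ s) :
    ∑ e' ∈ s, Function.update y e t e' = (∑ e' ∈ s, y e') + (t - y e) := by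
  rw [← Finset.sum_erase_add s (Function.update y e t) he, ← Finset.sum_erase_add s y he,
    Function.update_self]
  have h : ∑ e' ∈ s.erase e, Function.update y e t e' = ∑ e' ∈ s.erase e, y e' :=
    Finset.sum_congr rfl fun e' he' => Function.update_of_ne (Finset.ne_of_mem_erase he') t y
  rw [h]; ring

lemma sum_update_not_mem {y : Ω → ℝ} {e : Ω} {t : ℝ} {s : Finset Ω} (he : e ∉ s) :
    ∑ e' ∈ s, Function.update y e t e' = ∑ e' ∈ s, y e' :=
  Finset.sum_congr rfl fun e' he' =>
    Function.update_of_ne (by rintro rfl; exact he he') t y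

lemma blockProb_update_ne {y : Ω → ℝ} {e : Ω} {t : ℝ} {A : Finset Ω} {i : N} (h : blk e ≠ i) :
    blockProb blk (Function.update y e t) A i = blockProb blk y A i := by
  unfold blockProb
  split
  · rw [sum_update_not_mem (s := Finset.univ.filter (fun e' => blk e' = i)) (by simp [h])]
  · rw [sum_update_not_mem (s := A.filter (fun e' => blk e' = i))
      (fun hc => h (Finset.mem_filter.mp hc).2)]

lemma blockProb_update_self_empty {y : Ω → ℝ} {e : Ω} {t : ℝ} {A : Finset Ω}
    (h : A.filter (fun e' => blk e' = blk e) = ∅) :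
    blockProb blk (Function.update y e t) A (blk e)
      = blockProb blk y A (blk e) - (t - y e) := by
  unfold blockProb
  rw [if_pos h, if_pos h,
    sum_update_mem (s := Finset.univ.filter (fun e' => blk e' = blk e)) (by simp)]
  ring

lemma blockProb_update_self_mem {y : Ω → ℝ} {e : Ω} {t : ℝ} {A : Finset Ω} (hA : e ∈ A) :
    blockProb blk (Function.update y e t) A (blk e)
      = blockProb blk y A (blk e) + (t - y e) := by
  unfold blockProb
  have he : e ∈ A.filter (fun e' => blk e' = blk e) := by simp [hA]
  have hne : A.filter (fun e' => blk e' = blk e) ≠ ∅ := Finset.ne_empty_of_mem he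
  rw [if_neg hne, if_neg hne, sum_update_mem (s := A.filter (fun e' => blk e' = blk e)) he]

lemma blockProb_update_self_nm {y : Ω → ℝ} {e : Ω} {t : ℝ} {A : Finset Ω} (hA : e ∉ A)
    (hne : A.filter (fun e' => blk e' = blk e) ≠ ∅) :
    blockProb blk (Function.update y e t) A (blk e) = blockProb blk y A (blk e) := by
  unfold blockProb
  rw [if_neg hne, if_neg hne,
    sum_update_not_mem (s := A.filter (fun e' => blk e' = blk e))
      (fun hc => hA (Finset.mem_filter.mp hc).1)]

lemma blockProb_erase {y : Ω → ℝ} {e : Ω} {A : Finset Ω} {j : N} (hj : blk e ≠ j) :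
    blockProb blk y (A.erase e) j = blockProb blk y A j := by
  unfold blockProb
  have h : (A.erase e).filter (fun e' => blk e' = j) = A.filter (fun e' => blk e' = j) := by
    rw [Finset.filter_erase]
    exact Finset.erase_eq_of_notMem (fun hc => hj (Finset.mem_filter.mp hc).2)
  rw [h]

lemma blockProb_insert {y : Ω → ℝ} {e : Ω} {A : Finset Ω} {j : N} (hj : blk e ≠ j) :
    blockProb blk y (insert e A) j = blockProb blk y A j := by
  unfold blockProb
  have h : (insert e A).filter (fun e' => blk e' = j) = A.filter (fun e' => blk e' = j) := by
    rw [Finset.filter_insert, if_neg hj]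
  rw [h]


lemma pme_update_le {F : Finset Ω → ℝ} (hmono : ∀ A B : Finset Ω, A ⊆ B → F A ≤ F B)
    {y : Ω → ℝ} (hy : memPolytope blk y) (e : Ω) {t : ℝ} (ht : y e ≤ t) :
    pme blk F y ≤ pme blk F (Function.update y e t) := by
  classical
  set T := Finset.univ.filter (fun A => feasible blk A) with hT
  set Q : Finset Ω → ℝ := fun A => ∏ j ∈ Finset.univ.erase (blk e), blockProb blk y A j with hQ
  have hQnn : ∀ A, 0 ≤ Q A := fun A =>
    Finset.prod_nonneg fun j _ => blockProb_nonneg hy A j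
  have hprod : ∀ (z : Ω → ℝ) (A : Finset Ω),
      (∀ j, j ≠ blk e → blockProb blk z A j = blockProb blk y A j) →
      ∏ j : N, blockProb blk z A j = blockProb blk z A (blk e) * Q A := by
    intro z A hz
    rw [← Finset.mul_prod_erase Finset.univ _ (Finset.mem_univ (blk e))]
    congr 1
    exact Finset.prod_congr rfl fun j hj => hz j (Finset.ne_of_mem_erase hj)
  have key : ∀ A ∈ T, F A * ∏ j : N, blockProb blk (Function.update y e t) A j
      = F A * ∏ j : N, blockProb blk y A j
        + (t - y e) * ((if e ∈ A then F A * Q A else 0)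
            - (if A.filter (fun e' => blk e' = blk e) = ∅ then F A * Q A else 0)) := by
    intro A _
    rw [hprod (Function.update y e t) A
        (fun j hj => blockProb_update_ne (Ne.symm hj)),
      hprod y A (fun _ _ => rfl)]
    by_cases hmem : e ∈ A
    · have hne : A.filter (fun e' => blk e' = blk e) ≠ ∅ :=
        Finset.ne_empty_of_mem (by simp [hmem] : e ∈ A.filter (fun e' => blk e' = blk e))
      rw [blockProb_update_self_mem hmem, if_pos hmem, if_neg hne]
      ring
    · by_cases hemp : A.filter (fun e' => blk e' = blk e) = ∅
      · rw [blockProb_update_self_empty hemp, if_neg hmem, if_pos hemp]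
        ring
      · rw [blockProb_update_self_nm hmem hemp, if_neg hmem, if_neg hemp]
        ring
  have hsum : pme blk F (Function.update y e t) = pme blk F y + (t - y e) *
      ((∑ A ∈ T.filter (fun A => e ∈ A), F A * Q A)
        - ∑ A ∈ T.filter (fun A => A.filter (fun e' => blk e' = blk e) = ∅), F A * Q A) := by
    unfold pme
    rw [Finset.sum_congr rfl key, Finset.sum_add_distrib, ← Finset.mul_sum,
      Finset.sum_sub_distrib, ← Finset.sum_filter, ← Finset.sum_filter]
  have hbij : (∑ A ∈ T.filter (fun A => e ∈ A), F A * Q A)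
      = ∑ A ∈ T.filter (fun A => A.filter (fun e' => blk e' = blk e) = ∅),
          F (insert e A) * Q A := by
    refine Finset.sum_nbij' (fun A => A.erase e) (fun A => insert e A) ?_ ?_ ?_ ?_ ?_
    · intro A hA
      obtain ⟨hAT, hmem⟩ := Finset.mem_filter.mp hA
      have hfeas : feasible blk A := (Finset.mem_filter.mp hAT).2
      have hsing : A.filter (fun e' => blk e' = blk e) = {e} :=
        Finset.eq_singleton_iff_unique_mem.mpr
          ⟨by simp [hmem], fun b hb =>
            Finset.card_le_one.mp (hfeas (blk e)) b hb e (by simp [hmem])⟩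
      refine Finset.mem_filter.mpr ⟨Finset.mem_filter.mpr ⟨Finset.mem_univ _, ?_⟩, ?_⟩
      · intro j
        rw [Finset.filter_erase]
        exact le_trans (Finset.card_le_card (Finset.erase_subset _ _)) (hfeas j)
      · rw [Finset.filter_erase, hsing, Finset.erase_singleton]
    · intro A hA
      obtain ⟨hAT, hemp⟩ := Finset.mem_filter.mp hA
      have hfeas : feasible blk A := (Finset.mem_filter.mp hAT).2
      refine Finset.mem_filter.mpr ⟨Finset.mem_filter.mpr ⟨Finset.mem_univ _, ?_⟩, by simp⟩
      intro j
      rw [Finset.filter_insert]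
      by_cases hb : blk e = j
      · rw [if_pos hb, ← hb, hemp]
        simp
      · rw [if_neg hb]
        exact hfeas j
    · intro A hA
      exact Finset.insert_erase (Finset.mem_filter.mp hA).2
    · intro A hA
      have hemp := (Finset.mem_filter.mp hA).2
      have hnm : e ∉ A := fun hc =>
        Finset.ne_empty_of_mem (by simp [hc] : e ∈ A.filter (fun e' => blk e' = blk e)) hemp
      exact Finset.erase_insert hnm
    · intro A hA
      have hmem := (Finset.mem_filter.mp hA).2
      have hQeq : Q (A.erase e) = Q A :=
        Finset.prod_congr rfl fun j hj =>
          blockProb_erase (Ne.symm (Finset.ne_of_mem_erase hj))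
      rw [Finset.insert_erase hmem, hQeq]
  have hnn : 0 ≤ (∑ A ∈ T.filter (fun A => e ∈ A), F A * Q A)
      - ∑ A ∈ T.filter (fun A => A.filter (fun e' => blk e' = blk e) = ∅), F A * Q A := by
    rw [hbij, ← Finset.sum_sub_distrib]
    refine Finset.sum_nonneg fun A _ => ?_
    have : F (insert e A) * Q A - F A * Q A = (F (insert e A) - F A) * Q A := by ring
    rw [this]
    exact mul_nonneg (sub_nonneg.mpr (hmono _ _ (Finset.subset_insert _ _))) (hQnn A)
  nlinarith [mul_nonneg (sub_nonneg.mpr ht) hnn]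

lemma memFace_memPolytope {x : Ω → ℝ} (h : memFace blk x) : memPolytope blk x :=
  ⟨h.1, fun i => le_of_eq (h.2 i)⟩

end Aux

/-- for normalized monotone `F`: (a) every point of the partition matroid
polytope is dominated by a point of the categorical face, so the maximum of the PME over
the polytope is attained on the face; (b) the maximum of the PME over the face is at
least `max_{A ∈ I} F(A)`. -/
theorem pme_max_on_face {N Ω : Type*} [Fintype N] [Fintype Ω]
    (blk : Ω → N) (hblk : Function.Surjective blk)
    (F : Finset Ω → ℝ)
    (hnorm : F ∅ = 0)
    (hmono : ∀ A B : Finset Ω, A ⊆ B → F A ≤ F B) :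
    (∀ x : Ω → ℝ, memPolytope blk x →
      ∃ x' : Ω → ℝ, memFace blk x' ∧ pme blk F x ≤ pme blk F x') ∧
    (∀ A : Finset Ω, feasible blk A →
      ∃ x : Ω → ℝ, memFace blk x ∧ F A ≤ pme blk F x) := by
  classical
  choose rep hrep using hblk
  constructor
  · -- part (a)
    have main : ∀ S : Finset N, ∀ x : Ω → ℝ, memPolytope blk x →
        ∃ x' : Ω → ℝ, memPolytope blk x' ∧
          (∀ i ∈ S, ∑ e ∈ Finset.univ.filter (fun e => blk e = i), x' e = 1) ∧
          pme blk F x ≤ pme blk F x' := by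
      intro S
      induction S using Finset.induction_on with
      | empty => intro x hx; exact ⟨x, hx, by simp, le_refl _⟩
      | @insert i S hiS ih =>
        intro x hx
        obtain ⟨x', hx', hS, hle⟩ := ih x hx
        set e := rep i with he
        have hbe : blk e = i := hrep i
        set t : ℝ := x' e + (1 - ∑ e' ∈ Finset.univ.filter (fun e' => blk e' = i), x' e')
          with hts
        have ht : x' e ≤ t := by rw [hts]; linarith [hx'.2 i]
        set x'' := Function.update x' e t with hx''
        have hemem : e ∈ Finset.univ.filter (fun e' => blk e' = i) := by simp [hbe]
        have hsumi : ∑ e' ∈ Finset.univ.filter (fun e' => blk e' = i), x'' e' = 1 := by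
          rw [hx'', sum_update_mem hemem, hts]
          ring
        have hsumj : ∀ j, j ≠ i → ∑ e' ∈ Finset.univ.filter (fun e' => blk e' = j), x'' e'
            = ∑ e' ∈ Finset.univ.filter (fun e' => blk e' = j), x' e' := by
          intro j hj
          rw [hx'']
          exact sum_update_not_mem (by simpa [hbe] using Ne.symm hj)
        have hnn : ∀ e', 0 ≤ x'' e' := by
          intro e'
          by_cases h : e' = e
          · subst h
            rw [hx'', Function.update_self]
            linarith [(hx'.1 e).1, ht]
          · rw [hx'', Function.update_of_ne h]
            exact (hx'.1 e').1
        have hub : ∀ e', x'' e' ≤ 1 := by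
          intro e'
          by_cases h : e' = e
          · subst h
            calc x'' e ≤ ∑ e'' ∈ Finset.univ.filter (fun e'' => blk e'' = i), x'' e'' :=
                  Finset.single_le_sum (fun e'' _ => hnn e'') hemem
            _ = 1 := hsumi
          · rw [hx'', Function.update_of_ne h]
            exact (hx'.1 e').2
        have hpoly : memPolytope blk x'' := by
          refine ⟨fun e' => ⟨hnn e', hub e'⟩, fun j => ?_⟩
          by_cases hj : j = i
          · subst hj; rw [hsumi]
          · rw [hsumj j hj]; exact hx'.2 j
        refine ⟨x'', hpoly, ?_, ?_⟩
        · intro j hj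
          rcases Finset.mem_insert.mp hj with h | h
          · subst h; exact hsumi
          · rw [hsumj j (fun hc => hiS (hc ▸ h))]
            exact hS j h
        · rw [hx'']
          exact le_trans hle (pme_update_le hmono hx' e ht)
    intro x hx
    obtain ⟨x', hx', hface, hle⟩ := main Finset.univ x hx
    exact ⟨x', ⟨hx'.1, fun i => hface i (Finset.mem_univ i)⟩, hle⟩
  · -- part (b)
    intro A hA
    set B := A ∪ Finset.univ.filter
        (fun e => A.filter (fun e' => blk e' = blk e) = ∅ ∧ e = rep (blk e)) with hB
    have hBfil : ∀ i : N, B.filter (fun e => blk e = i)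
        = if A.filter (fun e => blk e = i) = ∅ then {rep i}
          else A.filter (fun e => blk e = i) := by
      intro i
      by_cases h : A.filter (fun e => blk e = i) = ∅
      · rw [if_pos h]
        ext e'
        simp only [hB, Finset.mem_filter, Finset.mem_union, Finset.mem_singleton,
          Finset.mem_univ, true_and]
        constructor
        · rintro ⟨hmem | ⟨_, hrepeq⟩, hblki⟩
          · exfalso
            have hc : e' ∈ A.filter (fun e => blk e = i) := Finset.mem_filter.mpr ⟨hmem, hblki⟩
            rw [h] at hc
            exact absurd hc (Finset.notMem_empty _)
          · rw [hblki] at hrepeq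
            exact hrepeq
        · rintro rfl
          exact ⟨Or.inr ⟨by rw [hrep i]; exact h, by rw [hrep i]⟩, hrep i⟩
      · rw [if_neg h]
        ext e'
        simp only [hB, Finset.mem_filter, Finset.mem_union, Finset.mem_univ, true_and]
        constructor
        · rintro ⟨hmem | ⟨hemp, _⟩, hblki⟩
          · exact ⟨hmem, hblki⟩
          · exfalso
            rw [hblki] at hemp
            exact h hemp
        · rintro ⟨hmem, hblki⟩
          exact ⟨Or.inl hmem, hblki⟩
    have hcard : ∀ i : N, (B.filter (fun e => blk e = i)).card = 1 := by
      intro i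
      rw [hBfil i]
      by_cases h : A.filter (fun e => blk e = i) = ∅
      · rw [if_pos h]; simp
      · rw [if_neg h]
        exact le_antisymm (hA i) (Finset.card_pos.mpr (Finset.nonempty_iff_ne_empty.mpr h))
    set x : Ω → ℝ := fun e => if e ∈ B then 1 else 0 with hxdef
    have hsum : ∀ i : N, ∑ e ∈ Finset.univ.filter (fun e => blk e = i), x e = 1 := by
      intro i
      have hBB : (Finset.univ.filter (fun e => blk e = i)).filter (fun e => e ∈ B)
          = B.filter (fun e => blk e = i) := by
        ext e'
        simp only [Finset.mem_filter, Finset.mem_univ, true_and]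
        tauto
      rw [hxdef, Finset.sum_boole, hBB, hcard i]
      norm_num
    have hcoords : ∀ e, 0 ≤ x e ∧ x e ≤ 1 := by
      intro e
      rw [hxdef]
      dsimp only
      split <;> norm_num
    have hface : memFace blk x := ⟨hcoords, hsum⟩
    have hBfeas : feasible blk B := fun i => (hcard i).le
    have hprodone : ∀ i : N, blockProb blk x B i = 1 := by
      intro i
      have hne : B.filter (fun e => blk e = i) ≠ ∅ := by
        intro hc
        have h1 := hcard i
        rw [hc] at h1
        simp at h1
      unfold blockProb
      rw [if_neg hne]
      have hone : ∀ e ∈ B.filter (fun e => blk e = i), x e = 1 := by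
        intro e heB
        rw [hxdef]
        exact if_pos (Finset.mem_filter.mp heB).1
      rw [Finset.sum_congr rfl hone, Finset.sum_const, hcard i]
      norm_num
    have hterm : F B * ∏ i : N, blockProb blk x B i = F B := by
      rw [Finset.prod_congr rfl (fun i _ => hprodone i), Finset.prod_const_one, mul_one]
    have hBmem : B ∈ Finset.univ.filter (fun C => feasible blk C) :=
      Finset.mem_filter.mpr ⟨Finset.mem_univ _, hBfeas⟩
    have hstep : F B ≤ pme blk F x := by
      rw [← hterm]
      refine Finset.single_le_sum (f := fun C => F C * ∏ i : N, blockProb blk x C i)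
        (fun C _ => ?_) hBmem
      have hFC : 0 ≤ F C := by
        have h0 := hmono ∅ C (Finset.empty_subset C)
        rwa [hnorm] at h0
      exact mul_nonneg hFC
        (Finset.prod_nonneg fun i _ => blockProb_nonneg (memFace_memPolytope hface) C i)
    exact ⟨x, hface, le_trans (hmono A B Finset.subset_union_left) hstep⟩
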